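/- For every x̄ ∈ X_*, the twisting functor T_{x̄} : F_{x̄} → F^Γ_{x̄} and the untwisting functor U_{x̄} : F^Γ_{x̄} → F_{x̄} are mutually inverse isomorphisms of categories; that is, U_{x̄} ∘ T_{x̄} is the identity functor on F_{x̄} and T_{x̄} ∘ U_{x̄} is the identity functor on F^Γ_{x̄}. -/

import Mathlib

set_option linter.unusedSectionVars false

open scoped TensorProduct

noncomputable section

/-- The action of a group element on the maximal spectrum of `A`
(so that `m_{γ·x} = comap (γ⁻¹ • ·) m_x`). -/
def gammaDot (A Γ : Type*) [CommRing A] [Group Γ] [MulSemiringAction Γ A]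
    (γ : Γ) (x : MaximalSpectrum A) : MaximalSpectrum A :=
  ⟨Ideal.comap (MulSemiringAction.toRingHom Γ A γ⁻¹) x.asIdeal, by
    have := x.isMaximal
    exact Ideal.comap_isMaximal_of_surjective _ (MulAction.surjective γ⁻¹)⟩

/-- A finite set of points of `X` containing no two (distinct) points in the same
`Γ`-orbit, i.e. an element of `X_*`. -/
def NoTwoInOrbit (A Γ : Type*) [CommRing A] [Group Γ] [MulSemiringAction Γ A]
    (s : Finset (MaximalSpectrum A)) : Prop :=
  ∀ x ∈ s, ∀ y ∈ s, ∀ γ : Γ, gammaDot A Γ γ x = y → x = y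

/-- The ideal `I_η = ∏_{x ∈ Supp η} m_x ^ η x` of `A`. -/
def idealOf {A : Type*} [CommRing A] (η : MaximalSpectrum A →₀ ℕ) : Ideal A :=
  η.support.prod fun x => x.asIdeal ^ η x

universe u1 u2 u3 u4

variable (k : Type u1) (A : Type u2) (g : Type u3) (Γ : Type u4)
variable [Field k] [IsAlgClosed k] [CharZero k]
variable [CommRing A] [Algebra k A] [Algebra.FiniteType k A]
variable [LieRing g] [LieAlgebra k g] [Module.Finite k g] [LieAlgebra.IsSemisimple k g]
variable [CommGroup Γ] [Fintype Γ]
variable [MulSemiringAction Γ A] [SMulCommClass Γ k A]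
variable [DistribMulAction Γ g] [SMulCommClass Γ k g]

/-- The `k`-submodule `g ⊗ I` of `A ⊗[k] g` determined by an ideal `I ⊆ A`. -/
def gT (I : Ideal A) : Submodule k (A ⊗[k] g) :=
  Submodule.span k {z | ∃ f ∈ I, ∃ v : g, z = f ⊗ₜ[k] v}

/-- The diagonal action of `γ ∈ Γ` on `A ⊗[k] g` as a `k`-linear map. -/
def diagMap (γ : Γ) : (A ⊗[k] g) →ₗ[k] A ⊗[k] g :=
  TensorProduct.map (DistribMulAction.toLinearMap k A γ) (DistribMulAction.toLinearMap k g γ)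

/-- The set of `Γ`-fixed points of `A ⊗[k] g`, i.e. the equivariant map algebra
`(g ⊗ A)^Γ`, as a `k`-submodule. -/
def fixedSub : Submodule k (A ⊗[k] g) :=
  ⨅ γ : Γ, LinearMap.ker (diagMap k A g Γ γ - LinearMap.id)

lemma mem_fixedSub {z : A ⊗[k] g} :
    z ∈ fixedSub k A g Γ ↔ ∀ γ : Γ, diagMap k A g Γ γ z = z := by
  simp [fixedSub, sub_eq_zero, LinearMap.sub_apply]

/-- `A ⊗[k] g` is a Lie algebra over `k` (by restriction of scalars from `A`). -/
instance : LieAlgebra k (A ⊗[k] g) where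
  lie_smul t x y := by
    rw [← algebraMap_smul A t y, lie_smul, algebraMap_smul]

lemma diagMap_lie (hbr : ∀ (γ : Γ) (x y : g), γ • ⁅x, y⁆ = ⁅γ • x, γ • y⁆) (γ : Γ)
    (z w : A ⊗[k] g) :
    diagMap k A g Γ γ ⁅z, w⁆ = ⁅diagMap k A g Γ γ z, diagMap k A g Γ γ w⁆ := by
  induction z using TensorProduct.induction_on with
  | zero => simp
  | tmul a v =>
    induction w using TensorProduct.induction_on with
    | zero => simp
    | tmul b u =>
      rw [LieAlgebra.ExtendScalars.bracket_tmul]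
      simp only [diagMap, TensorProduct.map_tmul, DistribMulAction.toLinearMap, DistribSMul.toLinearMap_apply]
      rw [LieAlgebra.ExtendScalars.bracket_tmul, smul_mul', hbr]
    | add w1 w2 h1 h2 => rw [lie_add, map_add, h1, h2, map_add, lie_add]
  | add z1 z2 h1 h2 => rw [add_lie, map_add, h1, h2, map_add, add_lie]

/-- The equivariant map algebra `(g ⊗ A)^Γ` as a Lie subalgebra of `A ⊗[k] g`. -/
def fixedLie (hbr : ∀ (γ : Γ) (x y : g), γ • ⁅x, y⁆ = ⁅γ • x, γ • y⁆) :
    LieSubalgebra k (A ⊗[k] g) :=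
  { fixedSub k A g Γ with
    lie_mem' := by
      intro x y hx hy
      have hx' : x ∈ fixedSub k A g Γ := hx
      have hy' : y ∈ fixedSub k A g Γ := hy
      show ⁅x, y⁆ ∈ fixedSub k A g Γ
      rw [mem_fixedSub] at hx' hy' ⊢
      intro γ
      rw [diagMap_lie k A g Γ hbr, hx' γ, hy' γ] }

/-- `g ⊗ I` as a Lie ideal of `A ⊗[k] g`. -/
def gTLie (I : Ideal A) : LieIdeal k (A ⊗[k] g) :=
  { gT k A g I with
    lie_mem := by
      intro x m hm
      have hm' : m ∈ gT k A g I := hm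
      show ⁅x, m⁆ ∈ gT k A g I
      clear hm
      induction hm' using Submodule.span_induction with
      | mem z hz =>
        obtain ⟨f, hf, v, rfl⟩ := hz
        induction x using TensorProduct.induction_on with
        | zero => rw [zero_lie]; exact (gT k A g I).zero_mem
        | tmul a w =>
          rw [LieAlgebra.ExtendScalars.bracket_tmul]
          exact Submodule.subset_span ⟨a * f, I.mul_mem_left a hf, ⁅w, v⁆, rfl⟩
        | add x1 x2 h1 h2 => rw [add_lie]; exact (gT k A g I).add_mem h1 h2
      | zero => rw [lie_zero]; exact (gT k A g I).zero_mem
      | add z w _ _ h1 h2 => rw [lie_add]; exact (gT k A g I).add_mem h1 h2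
      | smul c z _ h => rw [lie_smul]; exact (gT k A g I).smul_mem c h }

variable {k A g Γ} in
/-- `(g ⊗ I)^Γ` as a Lie ideal of the equivariant map algebra `(g ⊗ A)^Γ`. -/
def fixedIdealOf (hbr : ∀ (γ : Γ) (x y : g), γ • ⁅x, y⁆ = ⁅γ • x, γ • y⁆) (I : Ideal A) :
    LieIdeal k ↥(fixedLie k A g Γ hbr) where
  carrier := {y | (y : A ⊗[k] g) ∈ gT k A g I}
  add_mem' := fun ha hb => (gT k A g I).add_mem ha hb
  zero_mem' := (gT k A g I).zero_mem
  smul_mem' := fun c y hy => by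
    simpa using (gT k A g I).smul_mem c hy
  lie_mem := fun {x m} hm => (gTLie k A g I).lie_mem hm
/-- Data of a fixed triangular decomposition `g = n⁻ ⊕ h ⊕ n⁺` of `g` together with
Chevalley generators `f_i` (`i ∈ ι`), the identification of the monoid `P⁺` of dominant
integral weights with `ι →₀ ℕ` (recording the values `λ(h_i)`), the corresponding linear
functionals on the Cartan subalgebra `h`, and the height function `ht` on weights (heights
are taken with respect to the simple roots; they are rational on the weight lattice). -/
structure TriData (k g ι : Type*) [Field k] [LieRing g] [LieAlgebra k g] where
  /-- the Cartan subalgebra `h` -/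
  hh : LieSubalgebra k g
  /-- the positive part `n⁺` -/
  np : LieSubalgebra k g
  /-- the negative part `n⁻` -/
  nm : LieSubalgebra k g
  /-- the negative Chevalley generators `f_i` -/
  fgen : ι → g
  /-- a dominant weight `λ = (λ(h_i))_i : ι →₀ ℕ` as a linear functional on `h` -/
  wt : (ι →₀ ℕ) →+ (↥hh →ₗ[k] k)
  /-- the height of a dominant weight -/
  ht : (ι →₀ ℕ) →+ ℚ
  cartan : hh.IsCartanSubalgebra
  fgen_mem : ∀ i, fgen i ∈ nm
  decomp : nm.toSubmodule ⊔ hh.toSubmodule ⊔ np.toSubmodule = ⊤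

variable {ι : Type*}

section Points

variable (k A Γ : Type*) [Field k] [CommRing A] [Algebra k A]
  [CommGroup Γ] [MulSemiringAction Γ A] [SMulCommClass Γ k A]

/-- The action of `Γ` on the rational points `X_rat`, realized as `k`-algebra
homomorphisms `A → k` (for a finitely generated algebra over an algebraically closed
field these are exactly the maximal ideals): `(γ · x)(f) = x(γ⁻¹ • f)`. -/
def cdot (γ : Γ) (x : A →ₐ[k] k) : A →ₐ[k] k :=
  x.comp (MulSemiringAction.toAlgHom k A γ⁻¹)

/-- `x̄` is a set of representatives for the `Γ`-orbits in the finite set `S` of rational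
points: it contains exactly one point from each `Γ`-orbit in `S`. -/
def OrbitReps (xbar S : Finset (A →ₐ[k] k)) : Prop :=
  (↑xbar : Set (A →ₐ[k] k)) ⊆ ↑S ∧
  (∀ s ∈ S, ∃ γ : Γ, ∃ y ∈ xbar, cdot k A Γ γ y = s) ∧
  (∀ y ∈ xbar, ∀ y' ∈ xbar, ∀ γ : Γ, cdot k A Γ γ y = y' → y = y')

/-- No two (distinct) points of `s` lie in the same `Γ`-orbit, i.e. `s ∈ X_*`. -/
def NoTwoInOrbitPt (s : Finset (A →ₐ[k] k)) : Prop :=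
  ∀ x ∈ s, ∀ y ∈ s, ∀ γ : Γ, cdot k A Γ γ x = y → x = y

/-- The ideal `I_η = ∏_{x ∈ Supp η} m_x ^ η x` of `A`, where `m_x` is the maximal ideal
corresponding to the rational point `x`. -/
def idealOfPt (η : (A →ₐ[k] k) →₀ ℕ) : Ideal A :=
  η.support.prod fun x => (RingHom.ker x) ^ η x

end Points

section Wt

variable {k A : Type*} [Field k] [CommRing A] [Algebra k A]

/-- `ψ_{x̄}`: the restriction of `ψ ∈ E` to a set of points `x̄` (extended by zero). -/
noncomputable def psiRes (ψ : (A →ₐ[k] k) →₀ (ι →₀ ℕ)) (xbar : Finset (A →ₐ[k] k)) :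
    (A →ₐ[k] k) →₀ (ι →₀ ℕ) :=
  haveI := Classical.decPred (· ∈ xbar)
  ψ.filter (· ∈ xbar)

/-- `wt ψ = ∑_x ψ(x)`, the total weight of `ψ ∈ E`. -/
def weightOf (ψ : (A →ₐ[k] k) →₀ (ι →₀ ℕ)) : ι →₀ ℕ := ψ.sum fun _ μ => μ

end Wt

/-- The action of `γ ∈ Γ` on dominant weights, induced by the action of `Γ` on the set `ι`
of nodes of the Dynkin diagram (diagram automorphisms): `(γ • λ)(h_i) = λ(h_{γ⁻¹ • i})`. -/
def pAct {Γ ι : Type*} [Group Γ] [MulAction Γ ι] (γ : Γ) (lam : ι →₀ ℕ) : ι →₀ ℕ :=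
  Finsupp.equivMapDomain (MulAction.toPerm γ) lam

universe uR uL

/-- A bundled Lie module over the Lie `R`-algebra `L`. -/
structure LMod (R : Type uR) (L : Type uL) [CommRing R] [LieRing L] [LieAlgebra R L] where
  carrier : Type (max uR uL)
  [isAddCommGroup : AddCommGroup carrier]
  [isModule : Module R carrier]
  [isLieRingModule : LieRingModule L carrier]
  [isLieModule : LieModule R L carrier]

attribute [instance] LMod.isAddCommGroup LMod.isModule LMod.isLieRingModule LMod.isLieModule

section CompSeries

variable {R L M : Type*} [CommRing R] [LieRing L] [LieAlgebra R L]
variable [AddCommGroup M] [Module R M] [LieRingModule L M] [LieModule R L M]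

/-- `F` is a chain of Lie submodules from `⊥` to `⊤` (the successive quotients are not yet
required to be irreducible; this is imposed via `FactorIso` against irreducible modules). -/
def IsCompChain (n : ℕ) (F : Fin (n + 1) → LieSubmodule R L M) : Prop :=
  Monotone F ∧ F 0 = ⊥ ∧ F (Fin.last n) = ⊤

/-- The `i`-th factor `F (i+1) / F i` of the chain `F` is isomorphic to `S`:  there is a
surjective morphism of Lie modules `F (i+1) → S` whose kernel is exactly `F i`. -/
def FactorIso (n : ℕ) (F : Fin (n + 1) → LieSubmodule R L M) (i : Fin n) (S : Type*)
    [AddCommGroup S] [Module R S] [LieRingModule L S] [LieModule R L S] : Prop :=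
  ∃ f : ↥(F i.succ) →ₗ⁅R,L⁆ S, Function.Surjective f ∧
    ∀ z : ↥(F i.succ), f z = 0 ↔ (z : M) ∈ F i.castSucc

end CompSeries

variable {ι : Type*} [Fintype ι] [MulAction Γ ι]

/-- The relations satisfied by the generator `w_ψ` of the local Weyl module `W(ψ)`:
`(n⁺ ⊗ A) ⬝ w = 0`, `(f_i ⊗ 1)^{λ(h_i)+1} ⬝ w = 0` where `λ = wt ψ`, and
`(b ⊗ f) ⬝ w = (∑_{x ∈ Supp ψ} ψ(x)(f(x) b)) w` for `b ∈ h`, `f ∈ A`. -/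
def IsWeylVec (T : TriData k g ι) (ψ : (A →ₐ[k] k) →₀ (ι →₀ ℕ)) {W : Type*}
    [AddCommGroup W] [Module k W] [LieRingModule (A ⊗[k] g) W] [LieModule k (A ⊗[k] g) W]
    (w : W) : Prop :=
  (∀ f : A, ∀ n ∈ T.np, ⁅(f ⊗ₜ[k] n : A ⊗[k] g), w⁆ = 0) ∧
  (∀ i : ι,
    (LieModule.toEnd k (A ⊗[k] g) W ((1 : A) ⊗ₜ[k] T.fgen i) ^ (weightOf ψ i + 1)) w = 0) ∧
  (∀ f : A, ∀ b : T.hh,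
    ⁅(f ⊗ₜ[k] (b : g) : A ⊗[k] g), w⁆ = (∑ x ∈ ψ.support, x f * T.wt (ψ x) b) • w)

/-- `W` is (a copy of) the local Weyl module `W(ψ)` of `g ⊗ A`:  it is generated by a
nonzero vector `w_ψ` satisfying the Weyl relations, and is universal with this property. -/
def IsWeylModule (T : TriData k g ι) (ψ : (A →ₐ[k] k) →₀ (ι →₀ ℕ)) (W : Type*)
    [AddCommGroup W] [Module k W] [LieRingModule (A ⊗[k] g) W] [LieModule k (A ⊗[k] g) W] :
    Prop :=
  ∃ w : W, w ≠ 0 ∧ IsWeylVec k A g T ψ w ∧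
    LieSubmodule.lieSpan k (A ⊗[k] g) ({w} : Set W) = ⊤ ∧
    ∀ (V : Type (max u1 u2 u3)) [AddCommGroup V] [Module k V] [LieRingModule (A ⊗[k] g) V]
      [LieModule k (A ⊗[k] g) V] (v : V), IsWeylVec k A g T ψ v →
        ∃! φ : W →ₗ⁅k,A ⊗[k] g⁆ V, φ w = v

/-- `V` is (a copy of) the irreducible evaluation module `V(ψ)` of `g ⊗ A` associated to
`ψ ∈ E`:  it is irreducible, finite-dimensional and possesses a nonzero vector satisfying
the Weyl relations for `ψ`. -/
def IsSimpleEvalMod (T : TriData k g ι) (ψ : (A →ₐ[k] k) →₀ (ι →₀ ℕ)) (V : Type*)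
    [AddCommGroup V] [Module k V] [LieRingModule (A ⊗[k] g) V] [LieModule k (A ⊗[k] g) V] :
    Prop :=
  LieModule.IsIrreducible k (A ⊗[k] g) V ∧ FiniteDimensional k V ∧
    ∃ v : V, v ≠ 0 ∧ IsWeylVec k A g T ψ v

/-- `ψ : X_rat → P⁺` is `Γ`-equivariant, i.e. `ψ ∈ E^Γ`. -/
def EquivariantE (ψ : (A →ₐ[k] k) →₀ (ι →₀ ℕ)) : Prop :=
  ∀ (γ : Γ) (x : A →ₐ[k] k), ψ (cdot k A Γ γ x) = pAct γ (ψ x)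

/-- The height of `ψ ∈ E^Γ`: the common value `∑_{x ∈ x̄} ht ψ(x)` for a set `x̄` of
`Γ`-orbit representatives of `Supp ψ` (computed here as the sum over the whole support
divided by `|Γ|`, using that `Γ` acts freely). -/
def htE (T : TriData k g ι) (ψ : (A →ₐ[k] k) →₀ (ι →₀ ℕ)) : ℚ :=
  (∑ x ∈ ψ.support, T.ht (ψ x)) / (Fintype.card Γ : ℚ)

variable {k A g Γ}

/-- `V` is (a copy of) the irreducible evaluation module `V_Γ(ψ)` of the equivariant map
algebra `(g ⊗ A)^Γ` associated to `ψ ∈ E^Γ`: the restriction to `(g ⊗ A)^Γ` of the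
irreducible evaluation module `V(ψ_{x̄})` of `g ⊗ A`, where `x̄` is a set of `Γ`-orbit
representatives of `Supp ψ`. -/
def IsSimpleEvalModΓ (hbr : ∀ (γ : Γ) (x y : g), γ • ⁅x, y⁆ = ⁅γ • x, γ • y⁆)
    (T : TriData k g ι) (ψ : (A →ₐ[k] k) →₀ (ι →₀ ℕ)) (V : Type*)
    [AddCommGroup V] [Module k V] [LieRingModule ↥(fixedLie k A g Γ hbr) V]
    [LieModule k ↥(fixedLie k A g Γ hbr) V] : Prop :=
  ∃ xbar : Finset (A →ₐ[k] k), OrbitReps k A Γ xbar ψ.support ∧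
    ∃ U : LMod k (A ⊗[k] g), IsSimpleEvalMod k A g T (psiRes ψ xbar) U.carrier ∧
      Nonempty (V ≃ₗ⁅k,↥(fixedLie k A g Γ hbr)⁆ U.carrier)

/-- `V` is (a copy of) the twisted local Weyl module `W_Γ(ψ)` of `(g ⊗ A)^Γ` for
`ψ ∈ E^Γ`: the restriction to `(g ⊗ A)^Γ` of the untwisted local Weyl module `W(ψ_{x̄})`,
where `x̄` is a set of `Γ`-orbit representatives of `Supp ψ`. -/
def IsTwistedWeylModule (hbr : ∀ (γ : Γ) (x y : g), γ • ⁅x, y⁆ = ⁅γ • x, γ • y⁆)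
    (T : TriData k g ι) (ψ : (A →ₐ[k] k) →₀ (ι →₀ ℕ)) (V : Type*)
    [AddCommGroup V] [Module k V] [LieRingModule ↥(fixedLie k A g Γ hbr) V]
    [LieModule k ↥(fixedLie k A g Γ hbr) V] : Prop :=
  ∃ xbar : Finset (A →ₐ[k] k), OrbitReps k A Γ xbar ψ.support ∧
    ∃ U : LMod k (A ⊗[k] g), IsWeylModule k A g T (psiRes ψ xbar) U.carrier ∧
      Nonempty (V ≃ₗ⁅k,↥(fixedLie k A g Γ hbr)⁆ U.carrier)

/-- The finite-dimensional `(g ⊗ A)`-module `U` lies in the subcategory `F_{x̄}`: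
equivalently (Proposition 9 of [CFK]), it is annihilated by `g ⊗ I_η` for some
`η` supported in `x̄`. -/
def InFx (xbar : Finset (A →ₐ[k] k)) (U : Type*) [AddCommGroup U] [Module k U]
    [LieRingModule (A ⊗[k] g) U] [LieModule k (A ⊗[k] g) U] : Prop :=
  FiniteDimensional k U ∧ ∃ η : (A →ₐ[k] k) →₀ ℕ, (↑η.support : Set (A →ₐ[k] k)) ⊆ ↑xbar ∧
    ∀ z ∈ gT k A g (idealOfPt k A η), ∀ v : U, ⁅z, v⁆ = 0

/-- The finite-dimensional `(g ⊗ A)^Γ`-module `V` lies in the subcategory `F^Γ_{x̄}`: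
equivalently, it is annihilated by `(g ⊗ I_η)^Γ` for some `η` supported in `x̄`. -/
def InFxΓ (hbr : ∀ (γ : Γ) (x y : g), γ • ⁅x, y⁆ = ⁅γ • x, γ • y⁆)
    (xbar : Finset (A →ₐ[k] k)) (V : Type*) [AddCommGroup V] [Module k V]
    [LieRingModule ↥(fixedLie k A g Γ hbr) V] [LieModule k ↥(fixedLie k A g Γ hbr) V] :
    Prop :=
  FiniteDimensional k V ∧ ∃ η : (A →ₐ[k] k) →₀ ℕ, (↑η.support : Set (A →ₐ[k] k)) ⊆ ↑xbar ∧
    ∀ y : ↥(fixedLie k A g Γ hbr), (y : A ⊗[k] g) ∈ gT k A g (idealOfPt k A η) →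
      ∀ v : V, ⁅y, v⁆ = 0

/-- The multiplicity of the irreducible `V_Γ(φ)` as a composition factor of the
finite-dimensional `(g ⊗ A)^Γ`-module `M` is `m`. -/
def MultΓ (hbr : ∀ (γ : Γ) (x y : g), γ • ⁅x, y⁆ = ⁅γ • x, γ • y⁆)
    (T : TriData k g ι) (M : Type*) [AddCommGroup M] [Module k M]
    [LieRingModule ↥(fixedLie k A g Γ hbr) M] [LieModule k ↥(fixedLie k A g Γ hbr) M]
    (φ : (A →ₐ[k] k) →₀ (ι →₀ ℕ)) (m : ℕ) : Prop :=
  ∃ (n : ℕ) (F : Fin (n + 1) → LieSubmodule k ↥(fixedLie k A g Γ hbr) M)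
    (φs : Fin n → ((A →ₐ[k] k) →₀ (ι →₀ ℕ))),
    IsCompChain n F ∧
    (∀ i : Fin n, EquivariantE k A Γ (φs i) ∧
      ∃ S : LMod k ↥(fixedLie k A g Γ hbr),
        IsSimpleEvalModΓ hbr T (φs i) S.carrier ∧ FactorIso n F i S.carrier) ∧
    Nat.card {i : Fin n // φs i = φ} = m

/-- The multiplicity of the irreducible `V(φ)` as a composition factor of the
finite-dimensional `(g ⊗ A)`-module `M` is `m`. -/
def MultMod (T : TriData k g ι) (M : Type*) [AddCommGroup M] [Module k M]
    [LieRingModule (A ⊗[k] g) M] [LieModule k (A ⊗[k] g) M]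
    (φ : (A →ₐ[k] k) →₀ (ι →₀ ℕ)) (m : ℕ) : Prop :=
  ∃ (n : ℕ) (F : Fin (n + 1) → LieSubmodule k (A ⊗[k] g) M)
    (φs : Fin n → ((A →ₐ[k] k) →₀ (ι →₀ ℕ))),
    IsCompChain n F ∧
    (∀ i : Fin n, ∃ S : LMod k (A ⊗[k] g),
        IsSimpleEvalMod k A g T (φs i) S.carrier ∧ FactorIso n F i S.carrier) ∧
    Nat.card {i : Fin n // φs i = φ} = m

/-- `M` is a maximal weight `(g ⊗ A)^Γ`-module of maximal weight `ψ`: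
`mult_ψ M = 1`, and every other `φ ∈ E^Γ` occurring in `M` satisfies `ht φ < ht ψ`. -/
def IsMaxWeightΓ (hbr : ∀ (γ : Γ) (x y : g), γ • ⁅x, y⁆ = ⁅γ • x, γ • y⁆)
    (T : TriData k g ι) (M : Type*) [AddCommGroup M] [Module k M]
    [LieRingModule ↥(fixedLie k A g Γ hbr) M] [LieModule k ↥(fixedLie k A g Γ hbr) M]
    (ψ : (A →ₐ[k] k) →₀ (ι →₀ ℕ)) : Prop :=
  ∃ (n : ℕ) (F : Fin (n + 1) → LieSubmodule k ↥(fixedLie k A g Γ hbr) M)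
    (φs : Fin n → ((A →ₐ[k] k) →₀ (ι →₀ ℕ))),
    IsCompChain n F ∧
    (∀ i : Fin n, EquivariantE k A Γ (φs i) ∧
      ∃ S : LMod k ↥(fixedLie k A g Γ hbr),
        IsSimpleEvalModΓ hbr T (φs i) S.carrier ∧ FactorIso n F i S.carrier) ∧
    Nat.card {i : Fin n // φs i = ψ} = 1 ∧
    (∀ i : Fin n, φs i ≠ ψ → htE k A g Γ T (φs i) < htE k A g Γ T ψ)

/-- The context fact (Bourbaki VIII §7.2) that twisting an irreducible highest weight
`g`-module by the automorphism `γ` produces the irreducible module of highest weight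
`γ_{Out} · λ`:  this is how `Γ` acts on `P⁺`. -/
def OutCompat (T : TriData k g ι) : Prop :=
  ∀ (γ : Γ) (lam : ι →₀ ℕ) (M N : LMod k g),
    (LieModule.IsIrreducible k g M.carrier ∧ FiniteDimensional k M.carrier ∧
      ∃ v : M.carrier, v ≠ 0 ∧ (∀ n ∈ T.np, ⁅n, v⁆ = 0) ∧
        (∀ b : T.hh, ⁅(b : g), v⁆ = T.wt lam b • v)) →
    (LieModule.IsIrreducible k g N.carrier ∧ FiniteDimensional k N.carrier ∧
      ∃ v : N.carrier, v ≠ 0 ∧ (∀ n ∈ T.np, ⁅n, v⁆ = 0) ∧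
        (∀ b : T.hh, ⁅(b : g), v⁆ = T.wt (pAct γ lam) b • v)) →
    ∃ e : M.carrier ≃ₗ[k] N.carrier, ∀ (x : g) (m : M.carrier), e ⁅x, m⁆ = ⁅γ • x, e m⁆
section Aux

open Finset in
lemma prod_ideal_mono {β : Type*} (s : Finset β) (f h : β → Ideal A)
    (hle : ∀ i ∈ s, f i ≤ h i) : s.prod f ≤ s.prod h := by
  classical
  induction s using Finset.induction_on with
  | empty => simp
  | insert a s hni ih =>
    rw [Finset.prod_insert hni, Finset.prod_insert hni]
    exact Ideal.mul_mono (hle a (Finset.mem_insert_self a s))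
      (ih fun i hi => hle i (Finset.mem_insert_of_mem hi))

lemma prod_pow_ker_le (s t : Finset (A →ₐ[k] k)) (hst : t ⊆ s) (n m : (A →ₐ[k] k) → ℕ)
    (h : ∀ x ∈ t, m x ≤ n x) :
    (s.prod fun x => (RingHom.ker x : Ideal A) ^ n x) ≤
      t.prod fun x => (RingHom.ker x : Ideal A) ^ m x := by
  classical
  calc (s.prod fun x => (RingHom.ker x : Ideal A) ^ n x)
      = ((s \ t).prod fun x => (RingHom.ker x : Ideal A) ^ n x) *
        (t.prod fun x => (RingHom.ker x : Ideal A) ^ n x) := (Finset.prod_sdiff hst).symm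
    _ ≤ t.prod fun x => (RingHom.ker x : Ideal A) ^ n x := Ideal.mul_le_right
    _ ≤ _ := prod_ideal_mono _ _ _ fun x hx => Ideal.pow_le_pow_right (h x hx)

lemma idealOfPt_le_of_le (η η' : (A →ₐ[k] k) →₀ ℕ) (h : ∀ x, η' x ≤ η x) :
    idealOfPt k A η ≤ idealOfPt k A η' := by
  have hsub : η'.support ⊆ η.support := fun x hx => by
    rw [Finsupp.mem_support_iff] at hx ⊢
    exact fun h0 => hx (Nat.le_antisymm (h0 ▸ h x) (Nat.zero_le _))
  exact prod_pow_ker_le _ _ hsub _ _ fun x _ => h x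

lemma gT_mono {I J : Ideal A} (h : I ≤ J) : gT k A g I ≤ gT k A g J :=
  Submodule.span_mono fun z hz => by obtain ⟨f, hf, v, hv⟩ := hz; exact ⟨f, h hf, v, hv⟩

lemma gT_top : gT k A g (⊤ : Ideal A) = ⊤ := by
  rw [eq_top_iff, ← TensorProduct.span_tmul_eq_top k A g]
  exact Submodule.span_le.mpr fun z hz => by
    obtain ⟨a, v, h⟩ := hz
    exact Submodule.subset_span ⟨a, trivial, v, h.symm⟩

lemma smul_mem_gT (I : Ideal A) {c : A} (hc : c ∈ I) (z : A ⊗[k] g) :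
    c • z ∈ gT k A g I := by
  induction z using TensorProduct.induction_on with
  | zero => rw [smul_zero]; exact Submodule.zero_mem _
  | tmul a v =>
    rw [TensorProduct.smul_tmul']
    exact Submodule.subset_span ⟨c • a, by simpa [smul_eq_mul] using I.mul_mem_right a hc, v, rfl⟩
  | add z1 z2 h1 h2 => rw [smul_add]; exact Submodule.add_mem _ h1 h2

lemma smul_gT_mem (I : Ideal A) (c : A) {z : A ⊗[k] g} (hz : z ∈ gT k A g I) :
    c • z ∈ gT k A g I := by
  induction hz using Submodule.span_induction with
  | mem z hz =>
    obtain ⟨f, hf, v, rfl⟩ := hz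
    rw [TensorProduct.smul_tmul']
    exact Submodule.subset_span ⟨c • f, by simpa [smul_eq_mul] using I.mul_mem_left c hf, v, rfl⟩
  | zero => rw [smul_zero]; exact Submodule.zero_mem _
  | add z1 z2 _ _ h1 h2 => rw [smul_add]; exact Submodule.add_mem _ h1 h2
  | smul t z _ h => rw [smul_comm]; exact Submodule.smul_mem _ t h

lemma diagMap_tmul (γ : Γ) (a : A) (v : g) :
    diagMap k A g Γ γ (a ⊗ₜ[k] v) = (γ • a) ⊗ₜ[k] (γ • v) := by
  simp [diagMap, DistribMulAction.toLinearMap, DistribSMul.toLinearMap_apply]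

lemma diagMap_diagMap (γ γ' : Γ) (z : A ⊗[k] g) :
    diagMap k A g Γ γ (diagMap k A g Γ γ' z) = diagMap k A g Γ (γ * γ') z := by
  induction z using TensorProduct.induction_on with
  | zero => simp
  | tmul a v => simp [diagMap_tmul, mul_smul]
  | add z1 z2 h1 h2 => simp only [map_add, h1, h2]

lemma diagMap_one (z : A ⊗[k] g) : diagMap k A g Γ 1 z = z := by
  induction z using TensorProduct.induction_on with
  | zero => simp
  | tmul a v => simp [diagMap_tmul]
  | add z1 z2 h1 h2 => simp only [map_add, h1, h2]

lemma diagMap_smulA (γ : Γ) (c : A) (z : A ⊗[k] g) :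
    diagMap k A g Γ γ (c • z) = (γ • c) • diagMap k A g Γ γ z := by
  induction z using TensorProduct.induction_on with
  | zero => simp
  | tmul a v =>
    rw [TensorProduct.smul_tmul', diagMap_tmul, diagMap_tmul, TensorProduct.smul_tmul',
      smul_eq_mul, smul_eq_mul, smul_mul']
  | add z1 z2 h1 h2 => rw [smul_add, map_add, h1, h2, map_add, smul_add]

lemma cdot_cdot (γ γ' : Γ) (x : A →ₐ[k] k) :
    cdot k A Γ γ (cdot k A Γ γ' x) = cdot k A Γ (γ * γ') x := by
  ext a
  show x (γ'⁻¹ • γ⁻¹ • a) = x ((γ * γ')⁻¹ • a)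
  rw [smul_smul, mul_inv_rev, mul_comm]

lemma cdot_one (x : A →ₐ[k] k) : cdot k A Γ 1 x = x := by
  ext a; simp [cdot]

lemma smul_mem_ker (γ : Γ) (x : A →ₐ[k] k) {c : A} (hc : c ∈ RingHom.ker x) :
    γ • c ∈ RingHom.ker (cdot k A Γ γ x) := by
  rw [RingHom.mem_ker] at hc ⊢
  show x (γ⁻¹ • γ • c) = 0
  rw [inv_smul_smul]; exact hc

lemma smul_mem_ker_pow (γ : Γ) (x : A →ₐ[k] k) (n : ℕ) :
    ∀ c ∈ (RingHom.ker x : Ideal A) ^ n, γ • c ∈ (RingHom.ker (cdot k A Γ γ x) : Ideal A) ^ n := by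
  induction n with
  | zero => intro c _; simp only [pow_zero, Ideal.one_eq_top]; trivial
  | succ n ih =>
    intro c hc
    rw [pow_succ] at hc ⊢
    refine Submodule.mul_induction_on hc (fun a ha b hb => ?_) (fun a b ha hb => ?_)
    · rw [smul_mul']
      exact Ideal.mul_mem_mul (ih a ha) (smul_mem_ker γ x hb)
    · rw [smul_add]; exact Submodule.add_mem _ ha hb

lemma smul_mem_ker_prod {P : Type*} (γ : Γ) (s : Finset P) (p : P → (A →ₐ[k] k)) (n : P → ℕ) :
    ∀ c ∈ s.prod fun i => (RingHom.ker (p i) : Ideal A) ^ n i,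
      γ • c ∈ s.prod fun i => (RingHom.ker (cdot k A Γ γ (p i)) : Ideal A) ^ n i := by
  classical
  induction s using Finset.induction_on with
  | empty => intro c _; simp only [Finset.prod_empty, Ideal.one_eq_top]; trivial
  | insert a s hni ih =>
    intro c hc
    rw [Finset.prod_insert hni] at hc ⊢
    refine Submodule.mul_induction_on hc (fun u hu v hv => ?_) (fun u v hu hv => ?_)
    · rw [smul_mul']
      exact Ideal.mul_mem_mul (smul_mem_ker_pow γ (p a) (n a) u hu) (ih v hv)
    · rw [smul_add]; exact Submodule.add_mem _ hu hv

lemma alghom_eq_of_ker_eq (x y : A →ₐ[k] k)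
    (h : (RingHom.ker x : Ideal A) = RingHom.ker y) : x = y := by
  ext a
  have hx : a - algebraMap k A (x a) ∈ RingHom.ker x := by
    simp [RingHom.mem_ker, map_sub, AlgHom.commutes]
  rw [h] at hx
  simp only [RingHom.mem_ker, map_sub, AlgHom.commutes, Algebra.algebraMap_self,
    RingHom.id_apply, sub_eq_zero] at hx
  exact hx.symm

lemma ker_isMaximal (x : A →ₐ[k] k) : (RingHom.ker x : Ideal A).IsMaximal :=
  RingHom.ker_isMaximal_of_surjective x fun c => ⟨algebraMap k A c, x.commutes c⟩

lemma ker_coprime (x y : A →ₐ[k] k) (h : x ≠ y) :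
    IsCoprime (RingHom.ker x : Ideal A) (RingHom.ker y) := by
  rw [Ideal.isCoprime_iff_sup_eq]
  by_contra hne
  have h1 : (RingHom.ker x : Ideal A) = RingHom.ker x ⊔ RingHom.ker y :=
    (ker_isMaximal x).eq_of_le hne le_sup_left
  have h2 : (RingHom.ker y : Ideal A) = RingHom.ker x ⊔ RingHom.ker y :=
    (ker_isMaximal y).eq_of_le hne le_sup_right
  exact h (alghom_eq_of_ker_eq x y (h1.trans h2.symm))

end Aux
section Aux2

lemma exists_e (hfree : ∀ γ : Γ, γ ≠ 1 → ∀ x : A →ₐ[k] k, cdot k A Γ γ x ≠ x)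
    (xbar : Finset (A →ₐ[k] k)) (hxbar : NoTwoInOrbitPt k A Γ xbar) (N : ℕ) :
    ∃ e : A, (1 - e) ∈ (xbar.prod fun x => (RingHom.ker x : Ideal A) ^ N) ∧
      ∀ γ : Γ, γ ≠ 1 → e ∈ xbar.prod fun x => (RingHom.ker (cdot k A Γ γ x) : Ideal A) ^ N := by
  classical
  set J1 : Ideal A := xbar.prod fun x => (RingHom.ker x : Ideal A) ^ N with hJ1
  set J2 : Ideal A := ((Finset.univ : Finset Γ).erase 1).prod fun γ =>
    xbar.prod fun x => (RingHom.ker (cdot k A Γ γ x) : Ideal A) ^ N with hJ2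
  have hco : IsCoprime J1 J2 := by
    apply IsCoprime.prod_left
    intro x hx
    apply IsCoprime.prod_right
    intro γ hγ
    apply IsCoprime.prod_right
    intro y hy
    refine IsCoprime.pow (ker_coprime x (cdot k A Γ γ y) fun hxy => ?_)
    have h1 : y = x := hxbar y hy x hx γ hxy.symm
    exact hfree γ (Finset.mem_erase.mp hγ).1 y (hxy.symm.trans h1.symm)
  obtain ⟨a, ha, b, hb, hab⟩ := Ideal.isCoprime_iff_exists.mp hco
  refine ⟨b, ?_, ?_⟩
  · rw [show (1 : A) - b = a from by rw [← hab]; ring]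
    exact ha
  · intro γ hγ
    have hmem : γ ∈ (Finset.univ : Finset Γ).erase 1 :=
      Finset.mem_erase.mpr ⟨hγ, Finset.mem_univ γ⟩
    have hle : J2 ≤ xbar.prod fun x => (RingHom.ker (cdot k A Γ γ x) : Ideal A) ^ N := by
      calc J2 = (xbar.prod fun x => (RingHom.ker (cdot k A Γ γ x) : Ideal A) ^ N) *
            (((Finset.univ : Finset Γ).erase 1).erase γ).prod (fun γ' =>
              xbar.prod fun x => (RingHom.ker (cdot k A Γ γ' x) : Ideal A) ^ N) :=
            (Finset.mul_prod_erase _ _ hmem).symm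
        _ ≤ _ := Ideal.mul_le_left
    exact hle hb

end Aux2
section Aux3

lemma averaging (hfree : ∀ γ : Γ, γ ≠ 1 → ∀ x : A →ₐ[k] k, cdot k A Γ γ x ≠ x)
    (xbar : Finset (A →ₐ[k] k)) (hxbar : NoTwoInOrbitPt k A Γ xbar)
    (η ηt : (A →ₐ[k] k) →₀ ℕ) (hle : ∀ x, η x ≤ ηt x)
    (hsup : (↑ηt.support : Set (A →ₐ[k] k)) ⊆ ↑xbar)
    {z : A ⊗[k] g} (hz : z ∈ gT k A g (idealOfPt k A η)) :
    ∃ w : A ⊗[k] g, w ∈ fixedSub k A g Γ ∧ w ∈ gT k A g (idealOfPt k A η) ∧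
      z - w ∈ gT k A g (idealOfPt k A ηt) := by
  classical
  set N : ℕ := ηt.sum fun _ n => n with hN'
  have hN : ∀ x, ηt x ≤ N := by
    intro x
    by_cases hx : x ∈ ηt.support
    · exact Finset.single_le_sum (f := fun x => ηt x) (fun _ _ => Nat.zero_le _) hx
    · simp [Finsupp.notMem_support_iff.mp hx]
  have hsupt : ηt.support ⊆ xbar := Finset.coe_subset.mp hsup
  have hsupη : η.support ⊆ xbar := by
    intro x hx
    apply hsupt
    rw [Finsupp.mem_support_iff] at hx ⊢
    exact fun h0 => hx (Nat.le_antisymm (h0 ▸ hle x) (Nat.zero_le _))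
  have key : ∀ ρ : (A →ₐ[k] k) →₀ ℕ, ρ.support ⊆ xbar → (∀ x, ρ x ≤ N) →
      (xbar.prod fun x => (RingHom.ker x : Ideal A) ^ N) ≤ idealOfPt k A ρ :=
    fun ρ h1 h2 => prod_pow_ker_le xbar ρ.support h1 (fun _ => N) (fun x => ρ x) fun x _ => h2 x
  obtain ⟨e, he1, he2⟩ := exists_e hfree xbar hxbar N
  set w : A ⊗[k] g := ∑ γ : Γ, diagMap k A g Γ γ (e • z) with hww
  have hterm : ∀ γ : Γ, γ ≠ 1 → diagMap k A g Γ γ (e • z) ∈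
      gT k A g (xbar.prod fun x => (RingHom.ker x : Ideal A) ^ N) := by
    intro γ hγ
    rw [diagMap_smulA]
    apply smul_mem_gT
    have h1 : e ∈ xbar.prod fun x => (RingHom.ker (cdot k A Γ γ⁻¹ x) : Ideal A) ^ N :=
      he2 γ⁻¹ (inv_ne_one.mpr hγ)
    have h2 := smul_mem_ker_prod γ xbar (fun x => cdot k A Γ γ⁻¹ x) (fun _ => N) e h1
    have h3 : ∀ x : A →ₐ[k] k, cdot k A Γ γ (cdot k A Γ γ⁻¹ x) = x := fun x => by
      rw [cdot_cdot, mul_inv_cancel, cdot_one]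
    simpa only [h3] using h2
  refine ⟨w, ?_, ?_, ?_⟩
  · rw [mem_fixedSub]
    intro γ'
    rw [hww, map_sum]
    calc ∑ γ : Γ, diagMap k A g Γ γ' (diagMap k A g Γ γ (e • z))
        = ∑ γ : Γ, diagMap k A g Γ (γ' * γ) (e • z) :=
          Finset.sum_congr rfl fun γ _ => diagMap_diagMap γ' γ (e • z)
      _ = ∑ γ : Γ, diagMap k A g Γ γ (e • z) := by
          exact Fintype.sum_equiv (Equiv.mulLeft γ') _ _ fun γ => rfl
  · apply Submodule.sum_mem
    intro γ _
    by_cases hγ : γ = 1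
    · subst hγ
      rw [diagMap_one]
      exact smul_gT_mem _ e hz
    · exact gT_mono (key η hsupη fun x => (hle x).trans (hN x)) (hterm γ hγ)
  · have hw : w = e • z + ∑ γ ∈ (Finset.univ : Finset Γ).erase 1, diagMap k A g Γ γ (e • z) := by
      rw [hww, ← Finset.add_sum_erase _ _ (Finset.mem_univ (1 : Γ)), diagMap_one]
    rw [hw, show z - (e • z + ∑ γ ∈ (Finset.univ : Finset Γ).erase 1,
        diagMap k A g Γ γ (e • z)) = (1 - e) • z -
          ∑ γ ∈ (Finset.univ : Finset Γ).erase 1, diagMap k A g Γ γ (e • z) from by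
      rw [sub_smul, one_smul]; abel]
    refine Submodule.sub_mem _ ?_ (Submodule.sum_mem _ fun γ hγ => ?_)
    · exact gT_mono (key ηt hsupt hN) (smul_mem_gT _ he1 z)
    · exact gT_mono (key ηt hsupt hN) (hterm γ (Finset.mem_erase.mp hγ).1)

end Aux3
section Aux4

lemma mem_fixedLie (hbr : ∀ (γ : Γ) (x y : g), γ • ⁅x, y⁆ = ⁅γ • x, γ • y⁆)
    {z : A ⊗[k] g} : z ∈ fixedLie k A g Γ hbr ↔ z ∈ fixedSub k A g Γ := Iff.rfl

lemma mem_gTLie {I : Ideal A} {z : A ⊗[k] g} : z ∈ gTLie k A g I ↔ z ∈ gT k A g I := Iff.rfl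

lemma lie_mem_gT (I : Ideal A) (u : A ⊗[k] g) {m : A ⊗[k] g} (hm : m ∈ gT k A g I) :
    ⁅u, m⁆ ∈ gT k A g I := (gTLie k A g I).lie_mem ((mem_gTLie (I := I)).mpr hm)

lemma lie_mem_gT' (I : Ideal A) (u : A ⊗[k] g) {m : A ⊗[k] g} (hm : m ∈ gT k A g I) :
    ⁅m, u⁆ ∈ gT k A g I := by
  rw [← lie_skew]
  exact Submodule.neg_mem _ (lie_mem_gT I u hm)

end Aux4
/-- Theorem 3.3(3) of the paper.  For `x̄ ∈ X_*`, the twisting functor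
`T_{x̄} : F_{x̄} → F^Γ_{x̄}` (restriction) and the untwisting functor `U_{x̄}` are mutually
inverse isomorphisms of categories.  This is expressed as:
(a) `U_{x̄} ∘ T_{x̄} = id`: for `U ∈ F_{x̄}`, the restriction of `U` lies in `F^Γ_{x̄}` and
the `(g ⊗ A)`-action recovered from the restricted action via any admissible `η`
coincides with the original action;
(b) `T_{x̄} ∘ U_{x̄} = id`: every `V ∈ F^Γ_{x̄}` is (isomorphic to) the restriction of some
`U ∈ F_{x̄}`;
(c) the functors act as the identity on underlying linear maps: every morphism of
`(g ⊗ A)^Γ`-modules between objects of `F_{x̄}` is a morphism of `(g ⊗ A)`-modules. -/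
theorem statement9
    (hbr : ∀ (γ : Γ) (x y : g), γ • ⁅x, y⁆ = ⁅γ • x, γ • y⁆)
    (hfree : ∀ γ : Γ, γ ≠ 1 → ∀ x : A →ₐ[k] k, cdot k A Γ γ x ≠ x)
    (xbar : Finset (A →ₐ[k] k)) (hxbar : NoTwoInOrbitPt k A Γ xbar) :
    (∀ (U : Type (max u1 u2 u3)) [AddCommGroup U] [Module k U]
      [LieRingModule (A ⊗[k] g) U] [LieModule k (A ⊗[k] g) U],
      InFx (g := g) xbar U →
        (InFxΓ hbr xbar U ∧
          ∀ η : (A →ₐ[k] k) →₀ ℕ, (↑η.support : Set (A →ₐ[k] k)) ⊆ ↑xbar →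
            (∀ y : ↥(fixedLie k A g Γ hbr),
                (y : A ⊗[k] g) ∈ gT k A g (idealOfPt k A η) → ∀ v : U, ⁅y, v⁆ = 0) →
            ∀ (x : A ⊗[k] g) (y : ↥(fixedLie k A g Γ hbr)),
              (y : A ⊗[k] g) - x ∈ gT k A g (idealOfPt k A η) →
                ∀ v : U, ⁅(y : A ⊗[k] g), v⁆ = ⁅x, v⁆)) ∧
    (∀ (V : Type (max u1 u2 u3)) [AddCommGroup V] [Module k V]
      [LieRingModule ↥(fixedLie k A g Γ hbr) V] [LieModule k ↥(fixedLie k A g Γ hbr) V],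
      InFxΓ hbr xbar V →
        ∃ U : LMod k (A ⊗[k] g), InFx (g := g) xbar U.carrier ∧
          Nonempty (U.carrier ≃ₗ⁅k,↥(fixedLie k A g Γ hbr)⁆ V)) ∧
    (∀ (U U' : Type (max u1 u2 u3)) [AddCommGroup U] [Module k U]
      [LieRingModule (A ⊗[k] g) U] [LieModule k (A ⊗[k] g) U]
      [AddCommGroup U'] [Module k U'] [LieRingModule (A ⊗[k] g) U']
      [LieModule k (A ⊗[k] g) U'],
      InFx (g := g) xbar U → InFx (g := g) xbar U' →
        ∀ f : U →ₗ⁅k,↥(fixedLie k A g Γ hbr)⁆ U',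
          ∀ (x : A ⊗[k] g) (v : U), f ⁅x, v⁆ = ⁅x, f v⁆) := by
  classical
  refine ⟨?_, ?_, ?_⟩
  · -- part (a)
    intro U _ _ _ _ hU
    obtain ⟨hfd, η₀, hs₀, hann₀⟩ := hU
    constructor
    · exact ⟨hfd, η₀, hs₀, fun y hy v => by
        rw [LieSubalgebra.coe_bracket_of_module]
        exact hann₀ y hy v⟩
    · intro η hsupp hann x y hyx v
      have hsupadd : (↑(η + η₀).support : Set (A →ₐ[k] k)) ⊆ ↑xbar := by
        intro p hp
        rcases Finset.mem_union.mp (Finsupp.support_add hp) with h | h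
        · exact hsupp h
        · exact hs₀ h
      obtain ⟨w, hwfix, hwmem, hwdiff⟩ := averaging hfree xbar hxbar η (η + η₀)
        (fun p => le_self_add) hsupadd hyx
      have h1 : ⁅w, v⁆ = 0 := by
        have := hann ⟨w, hwfix⟩ hwmem v
        rwa [LieSubalgebra.coe_bracket_of_module] at this
      have h2 : ⁅(y : A ⊗[k] g) - x - w, v⁆ = 0 := by
        apply hann₀
        exact gT_mono (idealOfPt_le_of_le (η + η₀) η₀ fun p => le_add_self) hwdiff
      rw [sub_lie, sub_lie, h1, sub_zero, sub_eq_zero] at h2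
      exact h2
  · -- part (b)
    intro V _ _ _ _ hV
    obtain ⟨hfd, η, hsupp, hann⟩ := hV
    have idz : idealOfPt k A (0 : (A →ₐ[k] k) →₀ ℕ) = ⊤ := by
      simp [idealOfPt]
    have sec : ∀ x : A ⊗[k] g, ∃ w, w ∈ fixedSub k A g Γ ∧
        x - w ∈ gT k A g (idealOfPt k A η) := by
      intro x
      have hx : x ∈ gT k A g (idealOfPt k A (0 : (A →ₐ[k] k) →₀ ℕ)) := by
        rw [idz, gT_top]; trivial
      obtain ⟨w, h1, _, h3⟩ := averaging hfree xbar hxbar 0 η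
        (fun p => Nat.zero_le _) hsupp hx
      exact ⟨w, h1, h3⟩
    let σ : A ⊗[k] g → ↥(fixedLie k A g Γ hbr) :=
      fun x => ⟨(sec x).choose, (sec x).choose_spec.1⟩
    have hσ : ∀ x : A ⊗[k] g, x - ((σ x : ↥(fixedLie k A g Γ hbr)) : A ⊗[k] g) ∈
        gT k A g (idealOfPt k A η) := fun x => (sec x).choose_spec.2
    have hcong : ∀ y y' : ↥(fixedLie k A g Γ hbr),
        ((y : A ⊗[k] g) - (y' : A ⊗[k] g)) ∈ gT k A g (idealOfPt k A η) →
        ∀ v : V, ⁅y, v⁆ = ⁅y', v⁆ := by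
      intro y y' hd v
      have hz := hann (y - y') hd v
      rwa [sub_lie, sub_eq_zero] at hz
    letI ringmod : LieRingModule (A ⊗[k] g) V := {
      bracket := fun x v => ⁅σ x, v⁆
      add_lie := by
        intro x y v
        show ⁅σ (x + y), v⁆ = ⁅σ x, v⁆ + ⁅σ y, v⁆
        have hmem : ((σ (x + y) : ↥(fixedLie k A g Γ hbr)) : A ⊗[k] g) -
            ((σ x + σ y : ↥(fixedLie k A g Γ hbr)) : A ⊗[k] g) ∈
            gT k A g (idealOfPt k A η) := by
          have h0 := Submodule.sub_mem _
            (Submodule.add_mem _ (hσ x) (hσ y)) (hσ (x + y))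
          convert h0 using 1
          push_cast
          abel
        rw [hcong _ _ hmem v, add_lie]
      lie_add := fun x u v => lie_add (σ x) u v
      leibniz_lie := by
        intro x y v
        show ⁅σ x, ⁅σ y, v⁆⁆ = ⁅σ ⁅x, y⁆, v⁆ + ⁅σ y, ⁅σ x, v⁆⁆
        have hmem : ((⁅σ x, σ y⁆ : ↥(fixedLie k A g Γ hbr)) : A ⊗[k] g) -
            ((σ ⁅x, y⁆ : ↥(fixedLie k A g Γ hbr)) : A ⊗[k] g) ∈
            gT k A g (idealOfPt k A η) := by
          have e1 : ((⁅σ x, σ y⁆ : ↥(fixedLie k A g Γ hbr)) : A ⊗[k] g) -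
              ((σ ⁅x, y⁆ : ↥(fixedLie k A g Γ hbr)) : A ⊗[k] g) =
              (⁅((σ x : ↥(fixedLie k A g Γ hbr)) : A ⊗[k] g) - x,
                ((σ y : ↥(fixedLie k A g Γ hbr)) : A ⊗[k] g)⁆ +
               ⁅x, ((σ y : ↥(fixedLie k A g Γ hbr)) : A ⊗[k] g) - y⁆) +
              (⁅x, y⁆ - ((σ ⁅x, y⁆ : ↥(fixedLie k A g Γ hbr)) : A ⊗[k] g)) := by
            rw [LieSubalgebra.coe_bracket, sub_lie, lie_sub]
            abel
          rw [e1]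
          refine Submodule.add_mem _ (Submodule.add_mem _ ?_ ?_) (hσ ⁅x, y⁆)
          · refine lie_mem_gT' _ _ ?_
            simpa [neg_sub] using Submodule.neg_mem _ (hσ x)
          · refine lie_mem_gT _ _ ?_
            simpa [neg_sub] using Submodule.neg_mem _ (hσ y)
        rw [← hcong _ _ hmem v, leibniz_lie]
    }
    letI liemod : LieModule k (A ⊗[k] g) V := {
      smul_lie := by
        intro c x v
        show @Bracket.bracket _ V (@LieRingModule.toBracket _ _ _ _ ‹LieRingModule ↥(fixedLie k A g Γ hbr) V›) (σ (c • x)) v = c • @Bracket.bracket _ V (@LieRingModule.toBracket _ _ _ _ ‹LieRingModule ↥(fixedLie k A g Γ hbr) V›) (σ x) v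
        have hmem : ((σ (c • x) : ↥(fixedLie k A g Γ hbr)) : A ⊗[k] g) -
            ((c • σ x : ↥(fixedLie k A g Γ hbr)) : A ⊗[k] g) ∈
            gT k A g (idealOfPt k A η) := by
          have h0 := Submodule.sub_mem _
            (Submodule.smul_mem _ c (hσ x)) (hσ (c • x))
          convert h0 using 1
          push_cast
          rw [smul_sub]
          abel
        rw [hcong _ _ hmem v, smul_lie]
      lie_smul := fun c x v => lie_smul c (σ x) v }
    refine ⟨⟨V⟩, ⟨hfd, η, hsupp, ?_⟩, ⟨?_⟩⟩
    · intro z hz v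
      show @Bracket.bracket _ V (@LieRingModule.toBracket _ _ _ _ ‹LieRingModule ↥(fixedLie k A g Γ hbr) V›) (σ z) v = 0
      have hmem : ((σ z : ↥(fixedLie k A g Γ hbr)) : A ⊗[k] g) ∈
          gT k A g (idealOfPt k A η) := by
        have h0 := Submodule.sub_mem _ hz (hσ z)
        simpa using h0
      exact hann (σ z) hmem v
    · refine (@LieModuleEquiv.mk k ↥(fixedLie k A g Γ hbr) V V _ _ _ _ _ _
        ((fixedLie k A g Γ hbr).lieRingModule) inferInstance
        (@LieModuleHom.mk k ↥(fixedLie k A g Γ hbr) V V _ _ _ _ _ _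
          ((fixedLie k A g Γ hbr).lieRingModule) inferInstance LinearMap.id ?_)
        (fun v => v) (fun _ => rfl) (fun _ => rfl))
      intro x m
      exact hcong (σ (x : A ⊗[k] g)) x
        (by simpa [neg_sub] using Submodule.neg_mem _ (hσ (x : A ⊗[k] g))) m
  · -- part (c)
    intro U U' _ _ _ _ _ _ _ _ hU hU' f x v
    obtain ⟨_, η₁, hs₁, h₁⟩ := hU
    obtain ⟨_, η₂, hs₂, h₂⟩ := hU'
    have idz : idealOfPt k A (0 : (A →ₐ[k] k) →₀ ℕ) = ⊤ := by
      simp [idealOfPt]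
    have hsupadd : (↑(η₁ + η₂).support : Set (A →ₐ[k] k)) ⊆ ↑xbar := by
      intro p hp
      rcases Finset.mem_union.mp (Finsupp.support_add hp) with h | h
      · exact hs₁ h
      · exact hs₂ h
    have hx : x ∈ gT k A g (idealOfPt k A (0 : (A →ₐ[k] k) →₀ ℕ)) := by
      rw [idz, gT_top]; trivial
    obtain ⟨w, hwfix, _, hwdiff⟩ := averaging hfree xbar hxbar 0 (η₁ + η₂)
      (fun p => Nat.zero_le _) hsupadd hx
    have hd1 : x - w ∈ gT k A g (idealOfPt k A η₁) :=
      gT_mono (idealOfPt_le_of_le _ _ fun p => le_self_add) hwdiff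
    have hd2 : x - w ∈ gT k A g (idealOfPt k A η₂) :=
      gT_mono (idealOfPt_le_of_le _ _ fun p => le_add_self) hwdiff
    have e1 : ⁅x, v⁆ = ⁅(⟨w, hwfix⟩ : ↥(fixedLie k A g Γ hbr)), v⁆ := by
      rw [LieSubalgebra.coe_bracket_of_module]
      have := h₁ _ hd1 v
      rwa [sub_lie, sub_eq_zero] at this
    have e2 : ⁅x, f v⁆ = ⁅(⟨w, hwfix⟩ : ↥(fixedLie k A g Γ hbr)), f v⁆ := by
      rw [LieSubalgebra.coe_bracket_of_module]
      have := h₂ _ hd2 (f v)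
      rwa [sub_lie, sub_eq_zero] at this
    rw [e1, f.map_lie, ← e2]

end
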